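/- Fix an integer N with 3 ≤ N ≤ 5 and a real c with 0 < c < (4/(N-2))·e^{-(6-N)/(N-2)}. Then f(x) = x² - c·(N·(e^x - 1 - x) - ((N-2)/2)·x·(e^x - 1)) satisfies f''(x) > 0 for all x ≥ 0, and consequently f(x) > 0 for all x > 0. -/

import Mathlib

open Real

theorem pohozaev_f_pos_low_dim (N : ℕ) (hN3 : 3 ≤ N) (hN5 : N ≤ 5)
    (c : ℝ) (hc0 : 0 < c)
    (hc1 : c < (4 / ((N : ℝ) - 2)) * exp (-(6 - (N : ℝ)) / ((N : ℝ) - 2)))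
    (f : ℝ → ℝ)
    (hf : ∀ x : ℝ, f x =
      x ^ 2 - c * ((N : ℝ) * (exp x - 1 - x) - (((N : ℝ) - 2) / 2) * x * (exp x - 1))) :
    (∀ x : ℝ, 0 ≤ x →
      0 < 2 - c * (2 * exp x - (((N : ℝ) - 2) / 2) * x * exp x)) ∧
    ∀ x : ℝ, 0 < x → 0 < f x := by
  have hfe : f = fun x => x ^ 2 -
      c * ((N : ℝ) * (exp x - 1 - x) - (((N : ℝ) - 2) / 2) * x * (exp x - 1)) := funext hf
  subst hfe
  set n : ℝ := (N : ℝ) with hn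
  have hn3 : (3:ℝ) ≤ n := by rw [hn]; exact_mod_cast hN3
  set a : ℝ := (n - 2) / 2 with ha
  have ha0 : 0 < a := by rw [ha]; linarith
  have hne : n - 2 ≠ 0 := by linarith
  set s : ℝ := (2 - a) / a with hs
  have has : a * s = 2 - a := by rw [hs]; field_simp
  -- key pointwise bound on the second derivative term
  have key : ∀ x : ℝ, 2 * exp x - a * x * exp x ≤ a * exp s := by
    intro x
    have h1 : -(x - s) + 1 ≤ exp (-(x - s)) := add_one_le_exp _
    have h2 : exp (x - s) * (1 - (x - s)) ≤ exp (x - s) * exp (-(x - s)) :=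
      mul_le_mul_of_nonneg_left (by linarith) (exp_pos _).le
    rw [← exp_add] at h2
    simp only [add_neg_cancel, exp_zero] at h2
    have hxe : exp x = exp s * exp (x - s) := by rw [← exp_add]; ring_nf
    have heq : 2 * exp x - a * x * exp x
        = a * exp s * (exp (x - s) * (1 - (x - s))) := by
      rw [hxe]; linear_combination (-(exp s * exp (x - s))) * has
    rw [heq]
    calc a * exp s * (exp (x - s) * (1 - (x - s))) ≤ a * exp s * 1 :=
          mul_le_mul_of_nonneg_left h2 (by positivity)
      _ = a * exp s := mul_one _
  have hca : c * (a * exp s) < 2 := by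
    have hne2 : a ≠ 0 := ne_of_gt ha0
    have h4 : 4 / (n - 2) = 2 / a := by rw [ha]; field_simp; norm_num
    have hms : -(6 - n) / (n - 2) = -s := by
      rw [hs, ha]
      field_simp
      ring
    rw [h4, hms] at hc1
    have hes : exp (-s) * exp s = 1 := by rw [← exp_add]; simp
    have := mul_lt_mul_of_pos_right hc1 (by positivity : (0:ℝ) < a * exp s)
    calc c * (a * exp s) < 2 / a * exp (-s) * (a * exp s) := this
      _ = 2 * (exp (-s) * exp s) * (a / a) := by ring
      _ = 2 := by rw [hes, div_self (ne_of_gt ha0)]; ring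
  have hsecond : ∀ x : ℝ, 0 < 2 - c * (2 * exp x - a * x * exp x) := by
    intro x
    have hk := key x
    nlinarith [mul_le_mul_of_nonneg_left hk hc0.le]
  refine ⟨fun x _ => hsecond x, ?_⟩
  set F' : ℝ → ℝ := fun x => 2 * x - c * (n * (exp x - 1) - a * ((exp x - 1) + x * exp x))
    with hF'
  have hdF : ∀ x : ℝ, HasDerivAt
      (fun x => x ^ 2 - c * (n * (exp x - 1 - x) - a * x * (exp x - 1))) (F' x) x := by
    intro x
    have hexp := Real.hasDerivAt_exp x
    have hid := hasDerivAt_id x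
    have h1 : HasDerivAt (fun x : ℝ => exp x - 1 - x) (exp x - 1) x := by
      exact (hexp.sub_const 1).sub hid
    have h2 : HasDerivAt (fun x : ℝ => x * (exp x - 1))
        (1 * (exp x - 1) + x * exp x) x := hid.mul (hexp.sub_const 1)
    have h3 : HasDerivAt (fun x : ℝ => x ^ 2) (2 * x) x := by
      simpa using hasDerivAt_pow 2 x
    have H := h3.sub (((h1.const_mul n).sub (h2.const_mul a)).const_mul c)
    have heq : (fun x : ℝ => x ^ 2 - c * (n * (exp x - 1 - x) - a * (x * (exp x - 1))))
        = fun x : ℝ => x ^ 2 - c * (n * (exp x - 1 - x) - a * x * (exp x - 1)) := by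
      funext y; ring
    replace H : HasDerivAt (fun x : ℝ => x ^ 2 - c * (n * (exp x - 1 - x) - a * (x * (exp x - 1)))) _ x := H
    rw [heq] at H
    convert H using 1
    rw [hF']; ring
  have hdF' : ∀ x : ℝ, HasDerivAt F' (2 - c * (2 * exp x - a * x * exp x)) x := by
    intro x
    have hexp := Real.hasDerivAt_exp x
    have hid := hasDerivAt_id x
    have h1 : HasDerivAt (fun x : ℝ => exp x - 1) (exp x) x := hexp.sub_const 1
    have h2 : HasDerivAt (fun x : ℝ => x * exp x) (1 * exp x + x * exp x) x :=
      hid.mul hexp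
    have h3 : HasDerivAt (fun x : ℝ => 2 * x) 2 x := by
      simpa using (hasDerivAt_id x).const_mul (2:ℝ)
    have H := h3.sub (((h1.const_mul n).sub ((h1.add h2).const_mul a)).const_mul c)
    rw [hF']
    refine H.congr_deriv ?_
    rw [ha]; ring
  have hF'mono : StrictMonoOn F' (Set.Ici 0) := by
    apply strictMonoOn_of_deriv_pos (convex_Ici 0)
    · exact fun x _ => (hdF' x).differentiableAt.continuousAt.continuousWithinAt
    · intro x _
      rw [(hdF' x).deriv]
      exact hsecond x
  have hF'0 : F' 0 = 0 := by simp [hF']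
  have hF'pos : ∀ x : ℝ, 0 < x → 0 < F' x := by
    intro x hx
    have := hF'mono Set.self_mem_Ici (le_of_lt hx : (0:ℝ) ≤ x) hx
    rwa [hF'0] at this
  have hFmono : StrictMonoOn
      (fun x => x ^ 2 - c * (n * (exp x - 1 - x) - a * x * (exp x - 1))) (Set.Ici 0) := by
    apply strictMonoOn_of_deriv_pos (convex_Ici 0)
    · exact fun x _ => (hdF x).differentiableAt.continuousAt.continuousWithinAt
    · intro x hx
      rw [interior_Ici] at hx
      rw [(hdF x).deriv]
      exact hF'pos x hx
  intro x hx
  have := hFmono Set.self_mem_Ici (le_of_lt hx : (0:ℝ) ≤ x) hx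
  simpa using this
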